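/- arXiv:2504.11077 — 2 statements merged into one kernel-verified Lean document; each statement's English description precedes it below -/
import Mathlib

section
/- Let β > 0, α ≤ 0, and g be the Lorentzian metric g = e^{-2αxₙ}[cos(2βxₙ)(-dx₁²+dx₂²) - 2 sin(2βxₙ)dx₁dx₂] + Σᵢ₌₃^{n-1} e^{-2λᵢxₙ}dxᵢ² + dxₙ² on ℝ^n. For the curve c(t) = (1/β)(3 sin t, -sin 2t, 0,…,0, (π/2)(1-cos t)), one has β² g(c'(t), c'(t)) = exp((π|α|/β)(1-cos t))·f(t) + (π²/4) sin² t, where f(t) = cos(π cos t)(9 cos²t - 4 cos²2t) + 12 sin(π cos t) cos 2t cos t. -/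
open Real

/-- The closed curve `c(t) = (1/β)(3 sin t, -sin 2t, 0,…,0, (π/2)(1-cos t))`. -/
noncomputable def petrovCurve (n : ℕ) (β : ℝ) (t : ℝ) : Fin n → ℝ := fun i =>
  if (i : ℕ) = 0 then 3 * Real.sin t / β
  else if (i : ℕ) = 1 then -Real.sin (2 * t) / β
  else if (i : ℕ) = n - 1 then Real.pi / 2 * (1 - Real.cos t) / β
  else 0

/-- The quadratic form of the generalized Petrov metric
`g = e^{-2αxₙ}[cos(2βxₙ)(-dx₁²+dx₂²) - 2 sin(2βxₙ)dx₁dx₂]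
  + Σᵢ₌₃^{n-1} e^{-2λᵢxₙ} dxᵢ² + dxₙ²`
at the point `x`, evaluated on a tangent vector `v`. -/
noncomputable def petrovMetric (n : ℕ) (hn : 4 ≤ n) (α β : ℝ)
    (l : Fin n → ℝ) (x v : Fin n → ℝ) : ℝ :=
  let iN : Fin n := ⟨n - 1, by omega⟩
  let i0 : Fin n := ⟨0, by omega⟩
  let i1 : Fin n := ⟨1, by omega⟩
  Real.exp (-2 * α * x iN) *
      (Real.cos (2 * β * x iN) * (-(v i0) ^ 2 + (v i1) ^ 2) -
        2 * Real.sin (2 * β * x iN) * v i0 * v i1) +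
    (∑ i ∈ Finset.univ.filter (fun i : Fin n => 2 ≤ (i : ℕ) ∧ (i : ℕ) < n - 1),
      Real.exp (-2 * l i * x iN) * (v i) ^ 2) +
    (v iN) ^ 2

/-- The auxiliary function `f` controlling the causal character of the curve. -/
noncomputable def fPet (t : ℝ) : ℝ :=
  Real.cos (Real.pi * Real.cos t) *
      (9 * Real.cos t ^ 2 - 4 * Real.cos (2 * t) ^ 2) +
    12 * Real.sin (Real.pi * Real.cos t) * Real.cos (2 * t) * Real.cos t


/-- Derivative of the Petrov curve, componentwise. -/
lemma petrovCurve_hasDerivAt (n : ℕ) (β t : ℝ) :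
    HasDerivAt (petrovCurve n β)
      (fun i : Fin n => if (i : ℕ) = 0 then 3 * Real.cos t / β
        else if (i : ℕ) = 1 then -(2 * Real.cos (2 * t)) / β
        else if (i : ℕ) = n - 1 then Real.pi / 2 * Real.sin t / β
        else 0) t := by
  rw [hasDerivAt_pi]
  intro i
  have h2 : HasDerivAt (fun x : ℝ => 2 * x) 2 t := by
    simpa using (hasDerivAt_id t).const_mul 2
  by_cases h0 : (i : ℕ) = 0
  · simp only [petrovCurve, h0, if_pos rfl, eq_self_iff_true, if_true]
    exact ((Real.hasDerivAt_sin t).const_mul 3).div_const β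
  · by_cases h1 : (i : ℕ) = 1
    · simp only [petrovCurve, h1, if_neg (show ¬(1 = 0) by omega), if_pos rfl, eq_self_iff_true, if_true]
      have := (((Real.hasDerivAt_sin (2 * t)).comp t h2).neg).div_const β
      exact this.congr_deriv (by ring)
    · by_cases hN : (i : ℕ) = n - 1
      · have h0' : ¬(n - 1 = 0) := by rw [← hN]; exact h0
        have h1' : ¬(n - 1 = 1) := by rw [← hN]; exact h1
        simp only [petrovCurve, hN, if_neg h0', if_neg h1', if_pos rfl, eq_self_iff_true, if_true]
        have := (((hasDerivAt_const t (1:ℝ)).sub (Real.hasDerivAt_cos t)).const_mul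
          (Real.pi / 2)).div_const β
        exact this.congr_deriv (by ring)
      · simp only [petrovCurve, if_neg h0, if_neg h1, if_neg hN]
        exact hasDerivAt_const t 0

theorem metric_along_petrovCurve (n : ℕ) (hn : 4 ≤ n) (α β : ℝ)
    (hα : α ≤ 0) (hβ : 0 < β) (l : Fin n → ℝ) :
    ∀ t : ℝ,
      β ^ 2 *
          petrovMetric n hn α β l (petrovCurve n β t)
            (deriv (petrovCurve n β) t) =
        Real.exp ((Real.pi * |α| / β) * (1 - Real.cos t)) * fPet t +
          (Real.pi ^ 2 / 4) * Real.sin t ^ 2 := by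
  intro t
  have hb : β ≠ 0 := hβ.ne'
  have hN0 : n - 1 ≠ 0 := by omega
  have hN1 : n - 1 ≠ 1 := by omega
  rw [(petrovCurve_hasDerivAt n β t).deriv]
  simp only [petrovMetric, petrovCurve, hN0, hN1, if_neg, ite_true, ite_false,
    reduceIte, one_ne_zero]
  have hsum : (∑ i ∈ Finset.univ.filter
      (fun i : Fin n => 2 ≤ (i : ℕ) ∧ (i : ℕ) < n - 1),
      Real.exp (-2 * l i * (Real.pi / 2 * (1 - Real.cos t) / β)) *
        ((if (i : ℕ) = 0 then 3 * Real.cos t / β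
          else if (i : ℕ) = 1 then -(2 * Real.cos (2 * t)) / β
          else if (i : ℕ) = n - 1 then Real.pi / 2 * Real.sin t / β
          else 0) ^ 2)) = 0 := by
    apply Finset.sum_eq_zero
    intro i hi
    simp only [Finset.mem_filter] at hi
    have h0 : (i : ℕ) ≠ 0 := by omega
    have h1 : (i : ℕ) ≠ 1 := by omega
    have hN : (i : ℕ) ≠ n - 1 := by omega
    simp [h0, h1, hN]
  rw [hsum]
  have e1 : 2 * β * (Real.pi / 2 * (1 - Real.cos t) / β)
      = Real.pi - Real.pi * Real.cos t := by
    field_simp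
  have e2 : -2 * α * (Real.pi / 2 * (1 - Real.cos t) / β)
      = Real.pi * |α| / β * (1 - Real.cos t) := by
    rw [abs_of_nonpos hα]; field_simp
  rw [e1, e2, Real.cos_pi_sub, Real.sin_pi_sub, fPet]
  field_simp
  ring
end

section
/- Let g be an almost abelian Lie algebra with basis {X₁,…,Xₙ}, abelian ideal a = span{X₁,…,X_{n-1}}, and associated matrix A. Let λ₃ > ⋯ > λ_{n-1} be real numbers none of which is zero, α ≤ 0, β > 0, and A = [[α,-β],[β,α]] ⊕ Diag(λ₃,…,λ_{n-1}). Then g is indecomposable: there is no direct sum decomposition g = g₁ ⊕ g₂ into two nonzero ideals. Conversely, if some λᵢ = 0 then g is decomposable, with ℝXᵢ a direct complement commuting with the rest. -/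
open Matrix

/-- The almost abelian bracket on `ℝ^{n-1} × ℝ` determined by a matrix `A`. -/
def aaBracket {m : ℕ} (A : Matrix (Fin m) (Fin m) ℝ)
    (x y : (Fin m → ℝ) × ℝ) : (Fin m → ℝ) × ℝ :=
  (x.2 • A.mulVec y.1 - y.2 • A.mulVec x.1, 0)

/-- The block-diagonal matrix `[[α, -β],[β, α]] ⊕ Diag(λ₃,…,λ_{n-1})`
(in Lean, the diagonal entries of index `≥ 2` are given by `l`). -/
def Amat (m : ℕ) (α β : ℝ) (l : Fin m → ℝ) : Matrix (Fin m) (Fin m) ℝ :=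
  fun i j =>
    if (i : ℕ) = 0 ∧ (j : ℕ) = 0 then α
    else if (i : ℕ) = 0 ∧ (j : ℕ) = 1 then -β
    else if (i : ℕ) = 1 ∧ (j : ℕ) = 0 then β
    else if (i : ℕ) = 1 ∧ (j : ℕ) = 1 then α
    else if i = j then l i
    else 0

/-- A submodule closed under the almost abelian bracket, i.e. a Lie subalgebra. -/
def IsBracketSubalg {m : ℕ} (A : Matrix (Fin m) (Fin m) ℝ)
    (S : Submodule ℝ ((Fin m → ℝ) × ℝ)) : Prop :=
  ∀ x ∈ S, ∀ y ∈ S, aaBracket A x y ∈ S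

section aux
variable {m : ℕ} (α β : ℝ) (l : Fin m → ℝ)

lemma amat_row_hi (i : Fin m) (hi : 2 ≤ (i:ℕ)) (j : Fin m) :
    Amat m α β l i j = if i = j then l i else 0 := by
  have h0 : (i:ℕ) ≠ 0 := by omega
  have h1 : (i:ℕ) ≠ 1 := by omega
  simp [Amat, h0, h1]

lemma mulVec_hi (v : Fin m → ℝ) (i : Fin m) (hi : 2 ≤ (i:ℕ)) :
    (Amat m α β l).mulVec v i = l i * v i := by
  simp [Matrix.mulVec, dotProduct, amat_row_hi α β l i hi, ite_mul, Finset.sum_ite_eq]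

lemma mulVec_row0 (hm : 1 < m) (v : Fin m → ℝ) :
    (Amat m α β l).mulVec v ⟨0, by omega⟩
      = α * v ⟨0, by omega⟩ - β * v ⟨1, hm⟩ := by
  set i0 : Fin m := ⟨0, by omega⟩
  set i1 : Fin m := ⟨1, hm⟩
  have hrow : ∀ j, Amat m α β l i0 j * v j
      = (if i0 = j then α * v j else 0) + (if i1 = j then -β * v j else 0) := by
    intro j
    by_cases hj0 : (j:ℕ) = 0
    · simp [Amat, Fin.ext_iff, i0, i1, hj0]
    · by_cases hj1 : (j:ℕ) = 1
      · simp [Amat, Fin.ext_iff, i0, i1, hj0, hj1]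
      · simp [Amat, Fin.ext_iff, i0, i1, hj0, hj1, Ne.symm hj0, Ne.symm hj1]
  show (∑ j, Amat m α β l i0 j * v j) = _
  rw [Finset.sum_congr rfl fun j _ => hrow j, Finset.sum_add_distrib]
  simp [Finset.sum_ite_eq]
  ring

lemma mulVec_row1 (hm : 1 < m) (v : Fin m → ℝ) :
    (Amat m α β l).mulVec v ⟨1, hm⟩
      = β * v ⟨0, by omega⟩ + α * v ⟨1, hm⟩ := by
  set i0 : Fin m := ⟨0, by omega⟩
  set i1 : Fin m := ⟨1, hm⟩
  have hrow : ∀ j, Amat m α β l i1 j * v j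
      = (if i0 = j then β * v j else 0) + (if i1 = j then α * v j else 0) := by
    intro j
    by_cases hj0 : (j:ℕ) = 0
    · simp [Amat, Fin.ext_iff, i0, i1, hj0]
    · by_cases hj1 : (j:ℕ) = 1
      · simp [Amat, Fin.ext_iff, i0, i1, hj0, hj1]
      · simp [Amat, Fin.ext_iff, i0, i1, hj0, hj1, Ne.symm hj0, Ne.symm hj1]
  show (∑ j, Amat m α β l i1 j * v j) = _
  rw [Finset.sum_congr rfl fun j _ => hrow j, Finset.sum_add_distrib]
  simp [Finset.sum_ite_eq]

lemma amat_inj (hm : 3 ≤ m) (hβ : β ≠ 0) (hl : ∀ i : Fin m, 2 ≤ (i:ℕ) → l i ≠ 0)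
    (v : Fin m → ℝ) (h : (Amat m α β l).mulVec v = 0) : v = 0 := by
  have h1m : 1 < m := by omega
  have e0 := congrFun h ⟨0, by omega⟩
  rw [mulVec_row0 α β l h1m] at e0
  have e1 := congrFun h ⟨1, h1m⟩
  rw [mulVec_row1 α β l h1m] at e1
  simp only [Pi.zero_apply] at e0 e1
  have hv0 : v ⟨0, by omega⟩ = 0 := by
    have hs : (α^2 + β^2) * v ⟨0, by omega⟩ = 0 := by linear_combination α * e0 + β * e1
    have : α^2 + β^2 ≠ 0 := by positivity
    exact (mul_eq_zero.mp hs).resolve_left this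
  have hv1 : v ⟨1, h1m⟩ = 0 := by
    rw [hv0] at e0
    have : β * v ⟨1, h1m⟩ = 0 := by linarith
    exact (mul_eq_zero.mp this).resolve_left hβ
  funext i
  rcases Nat.lt_or_ge (i:ℕ) 2 with hi | hi
  · interval_cases hiv : (i:ℕ)
    · have : i = ⟨0, by omega⟩ := Fin.ext hiv
      rw [this]; exact hv0
    · have : i = ⟨1, h1m⟩ := Fin.ext hiv
      rw [this]; exact hv1
  · have := congrFun h i
    rw [mulVec_hi α β l v i hi] at this
    simp only [Pi.zero_apply] at this
    exact (mul_eq_zero.mp this).resolve_left (hl i hi)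

end aux

section aux2
variable {m : ℕ} (α β : ℝ) (l : Fin m → ℝ)

lemma mulVec_single_hi (i : Fin m) (hi : 2 ≤ (i:ℕ)) (hli : l i = 0) :
    (Amat m α β l).mulVec (Pi.single i 1) = 0 := by
  funext j
  simp only [Pi.zero_apply]
  have hcol : ∀ j : Fin m, Amat m α β l j i = 0 := by
    intro j
    have h0 : (i:ℕ) ≠ 0 := by omega
    have h1 : (i:ℕ) ≠ 1 := by omega
    by_cases hji : j = i
    · subst hji; simp [Amat, h0, h1, hli]
    · simp [Amat, h0, h1, hji]
  show (∑ k, Amat m α β l j k * (Pi.single i 1 : Fin m → ℝ) k) = 0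
  rw [Finset.sum_eq_single i]
  · simp [hcol j]
  · intro b _ hb; simp [Pi.single_eq_of_ne hb]
  · simp

end aux2


theorem generalized_petrov_decomposability (m : ℕ) (hm : 3 ≤ m)
    (α β : ℝ) (l : Fin m → ℝ) :
    -- indecomposability when all λᵢ are nonzero (with α ≤ 0, β > 0 and λ₃ > ⋯ > λ_{n-1})
    ((α ≤ 0) → (0 < β) → (∀ i : Fin m, 2 ≤ (i : ℕ) → l i ≠ 0) →
      (∀ i j : Fin m, 2 ≤ (i : ℕ) → (i : ℕ) < (j : ℕ) → l j < l i) →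
      ¬ ∃ S₁ S₂ : Submodule ℝ ((Fin m → ℝ) × ℝ),
          S₁ ≠ ⊥ ∧ S₂ ≠ ⊥ ∧
          IsBracketSubalg (Amat m α β l) S₁ ∧ IsBracketSubalg (Amat m α β l) S₂ ∧
          S₁ ⊓ S₂ = ⊥ ∧ S₁ ⊔ S₂ = ⊤ ∧
          (∀ x ∈ S₁, ∀ y ∈ S₂, aaBracket (Amat m α β l) x y = 0)) ∧
    -- decomposability with complement ℝ·Xᵢ when some λᵢ = 0
    (∀ i : Fin m, 2 ≤ (i : ℕ) → l i = 0 →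
      ∃ S₁ : Submodule ℝ ((Fin m → ℝ) × ℝ),
        S₁ ≠ ⊥ ∧
        Submodule.span ℝ {((Pi.single i 1 : Fin m → ℝ), (0 : ℝ))} ≠ ⊥ ∧
        IsBracketSubalg (Amat m α β l) S₁ ∧
        IsBracketSubalg (Amat m α β l)
          (Submodule.span ℝ {((Pi.single i 1 : Fin m → ℝ), (0 : ℝ))}) ∧
        S₁ ⊓ Submodule.span ℝ {((Pi.single i 1 : Fin m → ℝ), (0 : ℝ))} = ⊥ ∧
        S₁ ⊔ Submodule.span ℝ {((Pi.single i 1 : Fin m → ℝ), (0 : ℝ))} = ⊤ ∧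
        (∀ x ∈ S₁, ∀ y ∈ Submodule.span ℝ {((Pi.single i 1 : Fin m → ℝ), (0 : ℝ))},
          aaBracket (Amat m α β l) x y = 0)) := by
  constructor
  · -- Part 1: indecomposability
    rintro hα hβ hl _hmono ⟨S₁, S₂, h1ne, h2ne, _h1sub, _h2sub, hinf, hsup, hcomm⟩
    have hinj := amat_inj α β l hm (ne_of_gt hβ) hl
    by_cases c1 : ∀ x ∈ S₁, x.2 = (0:ℝ)
    · by_cases c2 : ∀ y ∈ S₂, y.2 = (0:ℝ)
      · -- both inside the abelian ideal: can't span
        have htop : ((0 : Fin m → ℝ), (1:ℝ)) ∈ S₁ ⊔ S₂ := hsup ▸ Submodule.mem_top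
        rcases Submodule.mem_sup.mp htop with ⟨a, ha, b, hb, hab⟩
        have : a.2 + b.2 = 1 := congrArg Prod.snd hab
        rw [c1 a ha, c2 b hb] at this
        norm_num at this
      · -- S₂ has an element with nonzero last coordinate; then S₁ = ⊥
        push_neg at c2
        obtain ⟨y, hy, hy2⟩ := c2
        apply h1ne
        rw [Submodule.eq_bot_iff]
        intro x hx
        have hb := hcomm x hx y hy
        have hx2 := c1 x hx
        have hfst : x.2 • (Amat m α β l).mulVec y.1 - y.2 • (Amat m α β l).mulVec x.1 = 0 :=
          congrArg Prod.fst hb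
        rw [hx2, zero_smul, zero_sub, neg_eq_zero] at hfst
        have hAx : (Amat m α β l).mulVec x.1 = 0 := by
          have := smul_eq_zero.mp hfst
          tauto
        have hx1 := hinj _ hAx
        exact Prod.ext hx1 hx2
    · push_neg at c1
      obtain ⟨x, hx, hx2⟩ := c1
      by_cases c2 : ∀ y ∈ S₂, y.2 = (0:ℝ)
      · -- S₁ has an element with nonzero last coordinate; then S₂ = ⊥
        apply h2ne
        rw [Submodule.eq_bot_iff]
        intro y hy
        have hb := hcomm x hx y hy
        have hy2 := c2 y hy
        have hfst : x.2 • (Amat m α β l).mulVec y.1 - y.2 • (Amat m α β l).mulVec x.1 = 0 :=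
          congrArg Prod.fst hb
        rw [hy2, zero_smul, sub_zero] at hfst
        have hAy : (Amat m α β l).mulVec y.1 = 0 := by
          have := smul_eq_zero.mp hfst
          tauto
        have hy1 := hinj _ hAy
        exact Prod.ext hy1 hy2
      · -- both have elements with nonzero last coordinate
        push_neg at c2
        obtain ⟨y, hy, hy2⟩ := c2
        have hb := hcomm x hx y hy
        have hfst : x.2 • (Amat m α β l).mulVec y.1 - y.2 • (Amat m α β l).mulVec x.1 = 0 :=
          congrArg Prod.fst hb
        have hkey : (Amat m α β l).mulVec (x.2 • y.1 - y.2 • x.1) = 0 := by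
          rw [Matrix.mulVec_sub, Matrix.mulVec_smul, Matrix.mulVec_smul]
          exact hfst
        have hvec : x.2 • y.1 - y.2 • x.1 = 0 := hinj _ hkey
        have hz : y.2 • x = x.2 • y := by
          apply Prod.ext
          · show y.2 • x.1 = x.2 • y.1
            have := sub_eq_zero.mp hvec
            exact this.symm
          · show y.2 * x.2 = x.2 * y.2
            ring
        have hmem : y.2 • x ∈ S₁ ⊓ S₂ := by
          refine ⟨Submodule.smul_mem _ _ hx, ?_⟩
          rw [hz]; exact Submodule.smul_mem _ _ hy
        rw [hinf, Submodule.mem_bot] at hmem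
        have : y.2 * x.2 = 0 := by
          have := congrArg Prod.snd hmem
          simpa using this
        rcases mul_eq_zero.mp this with h | h
        · exact hy2 h
        · exact hx2 h
  · -- Part 2: decomposability
    intro i hi hli
    set p : (Fin m → ℝ) × ℝ := ((Pi.single i 1 : Fin m → ℝ), (0:ℝ)) with hp
    have hAp : (Amat m α β l).mulVec (Pi.single i 1) = 0 :=
      mulVec_single_hi α β l i hi hli
    have hrow : ∀ v : Fin m → ℝ, (Amat m α β l).mulVec v i = 0 := by
      intro v
      rw [mulVec_hi α β l v i hi, hli, zero_mul]
    refine ⟨LinearMap.ker ((LinearMap.proj i).comp (LinearMap.fst ℝ (Fin m → ℝ) ℝ)),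
      ?_, ?_, ?_, ?_, ?_, ?_, ?_⟩
    · -- S₁ ≠ ⊥
      intro h
      have hmem : ((0 : Fin m → ℝ), (1:ℝ)) ∈
          LinearMap.ker ((LinearMap.proj i).comp (LinearMap.fst ℝ (Fin m → ℝ) ℝ)) := by
        simp [LinearMap.mem_ker]
      rw [h, Submodule.mem_bot] at hmem
      have := congrArg Prod.snd hmem
      norm_num at this
    · -- span ≠ ⊥
      rw [Ne, Submodule.span_singleton_eq_bot]
      intro h
      have := congrFun (congrArg Prod.fst h) i
      simp [hp] at this
    · -- S₁ subalgebra
      intro x hx y hy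
      rw [LinearMap.mem_ker] at hx hy ⊢
      show (x.2 • (Amat m α β l).mulVec y.1 - y.2 • (Amat m α β l).mulVec x.1) i = 0
      simp [hrow]
    · -- span subalgebra
      intro x hx y hy
      rcases Submodule.mem_span_singleton.mp hx with ⟨c, rfl⟩
      rcases Submodule.mem_span_singleton.mp hy with ⟨d, rfl⟩
      have : aaBracket (Amat m α β l) (c • p) (d • p) = 0 := by
        simp [aaBracket, hp]
      rw [this]
      exact Submodule.zero_mem _
    · -- inf = ⊥
      rw [eq_bot_iff]
      rintro x ⟨hx1, hx2⟩
      rcases Submodule.mem_span_singleton.mp hx2 with ⟨c, rfl⟩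
      have hc : c = 0 := by
        have : (c • p).1 i = 0 := hx1
        simpa [hp] using this
      simp [hc]
    · -- sup = ⊤
      rw [eq_top_iff]
      rintro x -
      have hx : x = (x.1 - x.1 i • (Pi.single i 1 : Fin m → ℝ), x.2) + x.1 i • p := by
        apply Prod.ext <;> simp [hp]
      rw [hx]
      apply Submodule.add_mem
      · apply Submodule.mem_sup_left
        rw [LinearMap.mem_ker]
        show (x.1 - x.1 i • (Pi.single i 1 : Fin m → ℝ)) i = 0
        simp
      · exact Submodule.mem_sup_right (Submodule.smul_mem _ _ (Submodule.subset_span rfl))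
    · -- commuting
      intro x hx y hy
      rcases Submodule.mem_span_singleton.mp hy with ⟨c, rfl⟩
      show (x.2 • (Amat m α β l).mulVec (c • p).1 - (c • p).2 • (Amat m α β l).mulVec x.1,
        (0:ℝ)) = 0
      simp [hp, Matrix.mulVec_smul, hAp]
end
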